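/- Let p > 1, a ≥ 1, q real with (p-1)a > q-2. If f ∈ C²([0,T)) satisfies f(t) ≥ δ(t+R)^a and f''(t) ≥ m(t+R)^{-q} f(t)^p for all t ∈ [0,T), where δ, R, m > 0, then T is finite; i.e., f cannot exist globally on [0,∞). -/

import Mathlib

open Real

lemma comp_le (T0 : ℝ) (u v u' v' : ℝ → ℝ)
    (hu : ∀ t ∈ Set.Ici T0, HasDerivAt u (u' t) t)
    (hv : ∀ t ∈ Set.Ici T0, HasDerivAt v (v' t) t)
    (h0 : u T0 ≤ v T0)
    (hd : ∀ t ∈ Set.Ici T0, u' t ≤ v' t) :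
    ∀ t ∈ Set.Ici T0, u t ≤ v t := by
  have hw : ∀ t ∈ Set.Ici T0, HasDerivAt (fun t => v t - u t) (v' t - u' t) t :=
    fun t ht => (hv t ht).sub (hu t ht)
  have hmono : MonotoneOn (fun t => v t - u t) (Set.Ici T0) := by
    apply monotoneOn_of_deriv_nonneg (convex_Ici T0)
    · exact fun t ht => (hw t ht).differentiableAt.continuousAt.continuousWithinAt
    · intro t ht
      rw [interior_Ici] at ht
      exact (hw t (Set.mem_Ici.2 (Set.mem_Ioi.1 ht).le)).differentiableAt.differentiableWithinAt
    · intro t ht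
      rw [interior_Ici] at ht
      rw [(hw t (Set.mem_Ici.2 (Set.mem_Ioi.1 ht).le)).deriv]
      have := hd t (Set.mem_Ici.2 (Set.mem_Ioi.1 ht).le)
      linarith
  intro t ht
  have h := hmono Set.self_mem_Ici ht ht
  simp only at h
  linarith

lemma rpow_eventually_ge (R e M : ℝ) (hR : 0 < R) (he : 0 < e) :
    ∃ T ≥ (1:ℝ), ∀ t ≥ T, M ≤ (t + R) ^ e := by
  refine ⟨max 1 ((max 1 M) ^ e⁻¹), le_max_left _ _, ?_⟩
  intro t ht
  have h1 : (max 1 M) ^ e⁻¹ ≤ t + R := by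
    have h2 := le_trans (le_max_right _ _) ht
    linarith
  calc M ≤ max 1 M := le_max_right _ _
    _ = ((max 1 M) ^ e⁻¹) ^ e := (Real.rpow_inv_rpow (by positivity) he.ne').symm
    _ ≤ (t + R) ^ e := Real.rpow_le_rpow (by positivity) h1 he.le

lemma integ_once (T0 R c s : ℝ) (u u' : ℝ → ℝ)
    (hT0 : 1 ≤ T0) (hR : 0 < R) (hc : 0 < c) (hs : -1 < s)
    (hu : ∀ t ∈ Set.Ici T0, HasDerivAt u (u' t) t)
    (hd : ∀ t ≥ T0, c * (t + R) ^ s ≤ u' t) :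
    ∃ T1, T0 ≤ T1 ∧ ∀ t ≥ T1, c / (2 * (s + 1)) * (t + R) ^ (s + 1) ≤ u t := by
  have hs1 : (0:ℝ) < s + 1 := by linarith
  set K := c / (s + 1) with hK
  have hKpos : 0 < K := div_pos hc hs1
  set v : ℝ → ℝ := fun t => u T0 + K * ((t + R) ^ (s+1) - (T0 + R) ^ (s+1)) with hvdef
  have hv : ∀ t ∈ Set.Ici T0, HasDerivAt v (c * (t + R) ^ s) t := by
    intro t ht
    have htT : T0 ≤ t := ht
    have htR : (0:ℝ) < t + R := by linarith
    have h1 : HasDerivAt (fun t : ℝ => t + R) 1 t := (hasDerivAt_id t).add_const R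
    have h2 : HasDerivAt (fun x : ℝ => x ^ (s+1)) ((s+1) * (t+R) ^ (s+1-1)) (t+R) :=
      Real.hasDerivAt_rpow_const (Or.inl htR.ne')
    have h3 : HasDerivAt (fun t : ℝ => (t + R) ^ (s+1)) ((s+1) * (t+R) ^ (s+1-1) * 1) t :=
      by have := h2.comp t h1; exact this
    have h4 : HasDerivAt v (K * ((s+1) * (t+R) ^ (s+1-1) * 1)) t :=
      ((h3.sub_const _).const_mul K).const_add _
    convert h4 using 1
    rw [show s + 1 - 1 = s by ring, hK]
    field_simp
  have hcomp := comp_le T0 v u (fun t => c * (t + R) ^ s) u' hv hu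
    (by simp [hvdef]) (fun t ht => hd t ht)
  set B := K * (T0 + R) ^ (s+1) - u T0 with hB
  obtain ⟨T', hT'1, hT'⟩ := rpow_eventually_ge R (s+1) (max 0 (2 * B / K)) hR hs1
  refine ⟨max T0 T', le_max_left _ _, ?_⟩
  intro t ht
  have ht0 : T0 ≤ t := le_trans (le_max_left _ _) ht
  have hvt := hcomp t ht0
  have hbig := hT' t (le_trans (le_max_right _ _) ht)
  have hbig2 : 2 * B / K ≤ (t + R) ^ (s+1) := le_trans (le_max_right _ _) hbig
  have hKhalf : B ≤ K / 2 * (t + R) ^ (s+1) := by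
    rw [div_le_iff₀ hKpos] at hbig2
    nlinarith
  have : v t = u T0 + K * (t + R) ^ (s+1) - K * (T0 + R) ^ (s+1) := by
    simp [hvdef]; ring
  have hfin : K / 2 * (t + R) ^ (s+1) ≤ u t := by
    rw [this] at hvt
    nlinarith
  have : c / (2 * (s + 1)) = K / 2 := by rw [hK, div_div, mul_comm]
  rw [this]
  exact hfin

lemma ode_power_bound (R m q pp C A t : ℝ) (ft : ℝ)
    (hR : 0 < R) (hm : 0 < m) (hC : 0 < C) (hpp : 0 < pp) (ht : 1 ≤ t)
    (hlow : C * (t + R) ^ A ≤ ft) :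
    m * C ^ pp * (t + R) ^ (pp * A - q) ≤ m * (t + R) ^ (-q) * ft ^ pp := by
  have htR : (0:ℝ) < t + R := by linarith
  have hbase : (0:ℝ) ≤ C * (t + R) ^ A := by positivity
  have h1 : (C * (t + R) ^ A) ^ pp ≤ ft ^ pp :=
    Real.rpow_le_rpow hbase hlow hpp.le
  have h2 : (C * (t + R) ^ A) ^ pp = C ^ pp * (t + R) ^ (A * pp) := by
    rw [Real.mul_rpow hC.le (by positivity), ← Real.rpow_mul htR.le]
  have h3 : (t + R) ^ (pp * A - q) = (t + R) ^ (-q) * (t + R) ^ (A * pp) := by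
    rw [← Real.rpow_add htR]
    ring_nf
  rw [h3]
  calc m * C ^ pp * ((t + R) ^ (-q) * (t + R) ^ (A * pp))
      = m * (t + R) ^ (-q) * (C ^ pp * (t + R) ^ (A * pp)) := by ring
    _ = m * (t + R) ^ (-q) * (C * (t + R) ^ A) ^ pp := by rw [h2]
    _ ≤ m * (t + R) ^ (-q) * ft ^ pp := by
        apply mul_le_mul_of_nonneg_left h1
        positivity

set_option maxHeartbeats 1000000 in
/-- Kato-type ODE blow-up lemma: a `C²` function on `[0,∞)` cannot satisfy
`f(t) ≥ δ(t+R)^a` and `f''(t) ≥ m(t+R)^{-q} f(t)^p` globally when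
`p > 1`, `a ≥ 1` and `(p-1)a > q-2`. -/
theorem stmt_0 (p a q δ R m : ℝ) (hp : 1 < p) (ha : 1 ≤ a)
    (haq : (p - 1) * a > q - 2) (hδ : 0 < δ) (hR : 0 < R) (hm : 0 < m)
    (f : ℝ → ℝ) (hf : ContDiffOn ℝ 2 f (Set.Ici (0 : ℝ)))
    (hlow : ∀ t ≥ (0 : ℝ), f t ≥ δ * (t + R) ^ a)
    (hode : ∀ t ≥ (0 : ℝ), deriv (deriv f) t ≥ m * (t + R) ^ (-q) * f t ^ p) :
    False := by
  have hp0 : (0:ℝ) < p := by linarith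
  set g := deriv f with hgdef
  have hfpos : ∀ t : ℝ, 0 ≤ t → 0 < f t := by
    intro t ht
    have h1 := hlow t ht
    have h2 : 0 < δ * (t + R) ^ a := by positivity
    linarith
  have hfd : ∀ t : ℝ, 1 ≤ t → HasDerivAt f (g t) t := by
    intro t ht
    have h0 : (0:ℝ) < t := by linarith
    exact ((hf.contDiffAt (Ici_mem_nhds h0)).differentiableAt two_ne_zero).hasDerivAt
  have hgcd : ContDiffOn ℝ 1 g (Set.Ioi (0:ℝ)) :=
    (hf.mono Set.Ioi_subset_Ici_self).deriv_of_isOpen isOpen_Ioi (by norm_num)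
  have hgd : ∀ t : ℝ, 1 ≤ t → HasDerivAt g (deriv g t) t := by
    intro t ht
    have h0 : t ∈ Set.Ioi (0:ℝ) := by simp; linarith
    exact (((hgcd.differentiableOn one_ne_zero) t h0).differentiableAt
      (isOpen_Ioi.mem_nhds h0)).hasDerivAt
  obtain ⟨ε0, hε0def⟩ : ∃ e : ℝ, e = (p - 1) * a - (q - 2) := ⟨_, rfl⟩
  have hε0 : 0 < ε0 := by rw [hε0def]; linarith
  set P : ℝ → Prop := fun A => ∃ C, 0 < C ∧ ∃ T, 1 ≤ T ∧ ∀ t ≥ T, C * (t + R) ^ A ≤ f t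
    with hPdef
  have base : P a := ⟨δ, hδ, 1, le_refl 1, fun t ht => hlow t (by linarith)⟩
  have key : ∀ A, a ≤ A → ∀ C, 0 < C → ∀ T, 1 ≤ T → (∀ t ≥ T, C * (t + R) ^ A ≤ f t) →
      ∃ T1, T ≤ T1 ∧
        (∀ t ≥ T1, m * C ^ p / (2 * (p * A - q + 1)) * (t + R) ^ (p * A - q + 1) ≤ g t) := by
    intro A hA C hC T hT hbound
    have hsA : -1 < p * A - q := by nlinarith
    have hdd : ∀ t ≥ T, m * C ^ p * (t + R) ^ (p * A - q) ≤ deriv g t := by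
      intro t ht
      have h1 := ode_power_bound R m q p C A t (f t) hR hm hC hp0 (le_trans hT ht)
        (hbound t ht)
      exact le_trans h1 (hode t (by linarith))
    obtain ⟨T1, hT1, hb1⟩ := integ_once T R (m * C ^ p) (p * A - q) g (deriv g) hT hR
      (mul_pos hm (Real.rpow_pos_of_pos hC p)) hsA
      (fun t ht => hgd t (le_trans hT ht)) hdd
    exact ⟨T1, hT1, hb1⟩
  have step : ∀ A, a ≤ A → P A → P (A + ε0) := by
    intro A hA hPA
    obtain ⟨C, hC, T, hT, hbound⟩ := hPA
    obtain ⟨T1, hT1, hb1⟩ := key A hA C hC T hT hbound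
    have hsA : -1 < p * A - q := by nlinarith
    have hc1 : 0 < m * C ^ p / (2 * (p * A - q + 1)) :=
      div_pos (mul_pos hm (Real.rpow_pos_of_pos hC p)) (by linarith)
    obtain ⟨T2, hT2, hb2⟩ := integ_once T1 R (m * C ^ p / (2 * (p * A - q + 1)))
      (p * A - q + 1) f g (le_trans hT hT1) hR hc1 (by linarith)
      (fun t ht => hfd t (le_trans (le_trans hT hT1) ht)) hb1
    refine ⟨m * C ^ p / (2 * (p * A - q + 1)) / (2 * (p * A - q + 1 + 1)),
      div_pos hc1 (by linarith), T2, le_trans (le_trans hT hT1) hT2, ?_⟩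
    intro t ht
    have htR1 : (1:ℝ) ≤ t + R := by
      have h5 : T2 ≤ t := ht
      have h6 := le_trans (le_trans hT hT1) hT2
      linarith
    have hexp : A + ε0 ≤ p * A - q + 1 + 1 := by
      rw [hε0def]
      nlinarith
    have h1 : (t + R) ^ (A + ε0) ≤ (t + R) ^ (p * A - q + 1 + 1) :=
      Real.rpow_le_rpow_of_exponent_le htR1 hexp
    calc m * C ^ p / (2 * (p * A - q + 1)) / (2 * (p * A - q + 1 + 1)) * (t + R) ^ (A + ε0)
        ≤ m * C ^ p / (2 * (p * A - q + 1)) / (2 * (p * A - q + 1 + 1)) *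
          (t + R) ^ (p * A - q + 1 + 1) :=
          mul_le_mul_of_nonneg_left h1 (div_pos hc1 (by linarith)).le
      _ ≤ f t := hb2 t ht
  have hPn : ∀ n : ℕ, P (a + n * ε0) := by
    intro n
    induction n with
    | zero => simpa using base
    | succ k ih =>
      have hk : a ≤ a + (k:ℝ) * ε0 := by
        have h5 : (0:ℝ) ≤ (k:ℝ) * ε0 := mul_nonneg (Nat.cast_nonneg k) hε0.le
        linarith
      have h := step (a + k * ε0) hk ih
      have heq : a + ((k+1 : ℕ) : ℝ) * ε0 = (a + k * ε0) + ε0 := by push_cast; ring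
      rw [heq]
      exact h
  have hbigA : ∃ A, a ≤ A ∧ 2 * q ≤ A * (p - 1) ∧ P A := by
    obtain ⟨n, hn⟩ := exists_nat_ge ((2 * q / (p - 1) - a) / ε0)
    refine ⟨a + n * ε0, ?_, ?_, hPn n⟩
    · have h5 : (0:ℝ) ≤ (n:ℝ) * ε0 := mul_nonneg (Nat.cast_nonneg n) hε0.le
      linarith
    · rw [div_le_iff₀ hε0] at hn
      have h2 : 2 * q / (p - 1) ≤ a + n * ε0 := by linarith
      rw [div_le_iff₀ (by linarith : (0:ℝ) < p - 1)] at h2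
      linarith
  obtain ⟨A, hAa, hAq, hPA⟩ := hbigA
  have hApos : 0 < A := by linarith
  obtain ⟨C, hC, T, hT, hbound⟩ := hPA
  obtain ⟨T1, hT1, hb1⟩ := key A hAa C hC T hT hbound
  have hT1' : (1:ℝ) ≤ T1 := le_trans hT hT1
  obtain ⟨c1, hc1def⟩ : ∃ c : ℝ, c = m * C ^ p / (2 * (p * A - q + 1)) := ⟨_, rfl⟩
  have hsA : -1 < p * A - q := by nlinarith
  have hc1 : 0 < c1 := by
    rw [hc1def]
    exact div_pos (mul_pos hm (Real.rpow_pos_of_pos hC p)) (by linarith)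
  have hgpos : ∀ t ≥ T1, 0 < g t := by
    intro t ht
    have htR : (0:ℝ) < t + R := by
      have h5 : T1 ≤ t := ht
      linarith
    have h6 := hb1 t ht
    rw [← hc1def] at h6
    have h2 : 0 < c1 * (t + R) ^ (p * A - q + 1) :=
      mul_pos hc1 (Real.rpow_pos_of_pos htR _)
    linarith
  obtain ⟨r, hrdef⟩ : ∃ r : ℝ, r = (p + 1) / 2 := ⟨_, rfl⟩
  have hr1 : 1 < r := by rw [hrdef]; linarith
  obtain ⟨c2, hc2def⟩ : ∃ c : ℝ, c = m * C ^ ((p - 1) / 2) := ⟨_, rfl⟩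
  have hc2 : 0 < c2 := by rw [hc2def]; exact mul_pos hm (Real.rpow_pos_of_pos hC _)
  have hfr : ∀ t ≥ T1, c2 * f t ^ r ≤ deriv g t := by
    intro t ht
    have ht1 : (1:ℝ) ≤ t := le_trans hT1' ht
    have htR : (1:ℝ) ≤ t + R := by linarith
    have hft : 0 < f t := hfpos t (by linarith)
    have hb := hbound t (le_trans hT1 ht)
    have h1 := ode_power_bound R 1 q ((p-1)/2) C A t (f t) hR one_pos hC
      (by linarith) ht1 hb
    have hexp0 : (0:ℝ) ≤ (p-1)/2 * A - q := by nlinarith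
    have h2 : (1:ℝ) ≤ (t + R) ^ ((p-1)/2 * A - q) := by
      calc (1:ℝ) = (t + R) ^ (0:ℝ) := by rw [Real.rpow_zero]
        _ ≤ (t + R) ^ ((p-1)/2 * A - q) := Real.rpow_le_rpow_of_exponent_le htR hexp0
    have h3 : C ^ ((p-1)/2) ≤ (t + R) ^ (-q) * f t ^ ((p-1)/2) := by
      have h7 := mul_le_mul_of_nonneg_left h2 (Real.rpow_pos_of_pos hC ((p-1)/2)).le
      simp only [one_mul, mul_one] at h1 h7
      linarith
    have hsplit : f t ^ p = f t ^ ((p-1)/2) * f t ^ r := by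
      rw [← Real.rpow_add hft, hrdef]
      congr 1
      ring
    have h4 : c2 * f t ^ r ≤ m * (t + R) ^ (-q) * f t ^ p := by
      rw [hsplit, hc2def]
      have h5 : (0:ℝ) ≤ f t ^ r := (Real.rpow_pos_of_pos hft r).le
      calc m * C ^ ((p-1)/2) * f t ^ r
          ≤ m * ((t + R) ^ (-q) * f t ^ ((p-1)/2)) * f t ^ r :=
            mul_le_mul_of_nonneg_right (mul_le_mul_of_nonneg_left h3 hm.le) h5
        _ = m * (t + R) ^ (-q) * (f t ^ ((p-1)/2) * f t ^ r) := by ring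
    exact le_trans h4 (hode t (by linarith))
  obtain ⟨E, hEdef⟩ : ∃ E : ℝ → ℝ, E = fun t => g t ^ 2 - 2 * c2 / (r + 1) * f t ^ (r + 1) :=
    ⟨_, rfl⟩
  obtain ⟨E', hE'def⟩ : ∃ E' : ℝ → ℝ,
      E' = fun t => 2 * g t * deriv g t - 2 * c2 * f t ^ r * g t := ⟨_, rfl⟩
  have hr0 : (0:ℝ) < r + 1 := by linarith
  have hEd : ∀ t ∈ Set.Ici T1, HasDerivAt E (E' t) t := by
    intro t ht
    have ht1 : (1:ℝ) ≤ t := le_trans hT1' ht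
    have hft : 0 < f t := hfpos t (by linarith)
    have h1 : HasDerivAt (fun t => g t ^ 2) (2 * g t * deriv g t) t := by
      simpa using (hgd t ht1).fun_pow 2
    have h2 : HasDerivAt (fun t => f t ^ (r + 1)) (g t * (r + 1) * f t ^ (r + 1 - 1)) t :=
      (hfd t ht1).rpow_const (Or.inl hft.ne')
    have h3 : HasDerivAt E (2 * g t * deriv g t -
        2 * c2 / (r + 1) * (g t * (r + 1) * f t ^ (r + 1 - 1))) t := by
      rw [hEdef]
      exact h1.sub (h2.const_mul _)
    convert h3 using 1
    rw [hE'def, show r + 1 - 1 = r by ring]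
    field_simp
  have hEmono : ∀ t ≥ T1, E T1 ≤ E t := by
    have h := comp_le T1 (fun _ => E T1) E (fun _ => 0) E'
      (fun t _ => hasDerivAt_const t (E T1)) hEd (le_refl _)
      (fun t ht => by
        have h1 := hgpos t ht
        have h2 := hfr t ht
        rw [hE'def]
        simp only
        nlinarith [mul_le_mul_of_nonneg_left h2 h1.le])
    exact fun t ht => h t ht
  obtain ⟨T2', hT2'one, hT2'⟩ := rpow_eventually_ge R (A * (r + 1))
    (max 0 (-(E T1)) * (r + 1) / (c2 * C ^ (r + 1))) hR (mul_pos hApos hr0)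
  set T2 := max T1 T2' with hT2def
  have hT2T1 : T1 ≤ T2 := le_max_left _ _
  have hT2one : (1:ℝ) ≤ T2 := le_trans hT1' hT2T1
  have hg2 : ∀ t ≥ T2, c2 / (r + 1) * f t ^ (r + 1) ≤ g t ^ 2 := by
    intro t ht
    have htT1 : T1 ≤ t := le_trans hT2T1 ht
    have ht1 : (1:ℝ) ≤ t := le_trans hT1' htT1
    have htR : (0:ℝ) < t + R := by linarith
    have hft : 0 < f t := hfpos t (by linarith)
    have hE1 := hEmono t htT1
    have hb := hbound t (le_trans hT1 htT1)
    have hfpow : C ^ (r + 1) * (t + R) ^ (A * (r + 1)) ≤ f t ^ (r + 1) := by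
      have h1 : (C * (t + R) ^ A) ^ (r + 1) ≤ f t ^ (r + 1) :=
        Real.rpow_le_rpow (mul_pos hC (Real.rpow_pos_of_pos htR A)).le hb (by linarith)
      have h2 : (C * (t + R) ^ A) ^ (r + 1) = C ^ (r + 1) * (t + R) ^ (A * (r + 1)) := by
        rw [Real.mul_rpow hC.le (Real.rpow_nonneg htR.le A), ← Real.rpow_mul htR.le]
      linarith [h2 ▸ h1]
    have hM := hT2' t (le_trans (le_max_right _ _) ht)
    have hne : c2 * C ^ (r + 1) ≠ 0 := (mul_pos hc2 (Real.rpow_pos_of_pos hC _)).ne'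
    have hDabs : -(E T1) ≤ c2 / (r + 1) * f t ^ (r + 1) := by
      have h3 : c2 * C ^ (r + 1) * (max 0 (-(E T1)) * (r + 1) / (c2 * C ^ (r + 1)))
          ≤ c2 * C ^ (r + 1) * (t + R) ^ (A * (r + 1)) :=
        mul_le_mul_of_nonneg_left hM (mul_pos hc2 (Real.rpow_pos_of_pos hC _)).le
      have h4 : c2 * C ^ (r + 1) * (max 0 (-(E T1)) * (r + 1) / (c2 * C ^ (r + 1)))
          = max 0 (-(E T1)) * (r + 1) := by
        rw [mul_comm, div_mul_cancel₀ _ hne]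
      rw [h4] at h3
      have h5 : c2 / (r + 1) * (C ^ (r + 1) * (t + R) ^ (A * (r + 1)))
          ≤ c2 / (r + 1) * f t ^ (r + 1) :=
        mul_le_mul_of_nonneg_left hfpow (div_pos hc2 hr0).le
      have h6 : max 0 (-(E T1)) ≤ c2 / (r + 1) * (C ^ (r + 1) * (t + R) ^ (A * (r + 1))) := by
        rw [div_mul_eq_mul_div, le_div_iff₀ hr0]
        linarith
      have h7 := le_max_right (0:ℝ) (-(E T1))
      linarith
    have hEt : E t = g t ^ 2 - 2 * c2 / (r + 1) * f t ^ (r + 1) := by rw [hEdef]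
    have h8 : 2 * c2 / (r + 1) * f t ^ (r + 1) = 2 * (c2 / (r + 1) * f t ^ (r + 1)) := by ring
    linarith [h8]
  obtain ⟨c3, hc3def⟩ : ∃ c : ℝ, c = Real.sqrt (c2 / (r + 1)) := ⟨_, rfl⟩
  have hc3 : 0 < c3 := by rw [hc3def]; exact Real.sqrt_pos.2 (div_pos hc2 hr0)
  obtain ⟨β, hβdef⟩ : ∃ b : ℝ, b = (r + 1) / 2 := ⟨_, rfl⟩
  have hβ1 : 1 < β := by rw [hβdef]; linarith
  have hgf : ∀ t ≥ T2, c3 * f t ^ β ≤ g t := by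
    intro t ht
    have htT1 : T1 ≤ t := le_trans hT2T1 ht
    have hft : 0 < f t := hfpos t (by linarith [le_trans hT1' htT1])
    have hgt := hgpos t htT1
    have h1 := hg2 t ht
    have h2 : f t ^ β = Real.sqrt (f t ^ (r + 1)) := by
      rw [Real.sqrt_eq_rpow, ← Real.rpow_mul hft.le, hβdef]
      congr 1
      ring
    calc c3 * f t ^ β = Real.sqrt (c2 / (r + 1)) * Real.sqrt (f t ^ (r + 1)) := by
          rw [hc3def, h2]
      _ = Real.sqrt (c2 / (r + 1) * f t ^ (r + 1)) :=
          (Real.sqrt_mul (div_pos hc2 hr0).le _).symm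
      _ ≤ Real.sqrt (g t ^ 2) := Real.sqrt_le_sqrt h1
      _ = g t := Real.sqrt_sq hgt.le
  obtain ⟨k, hkdef⟩ : ∃ k : ℝ, k = (β - 1) * c3 := ⟨_, rfl⟩
  have hk : 0 < k := by rw [hkdef]; exact mul_pos (by linarith) hc3
  set φ : ℝ → ℝ := fun t => f t ^ (1 - β) with hφdef
  have hφd : ∀ t ∈ Set.Ici T2, HasDerivAt φ (g t * (1 - β) * f t ^ (1 - β - 1)) t := by
    intro t ht
    have ht1 : (1:ℝ) ≤ t := le_trans hT2one ht
    have hft : 0 < f t := hfpos t (by linarith)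
    exact (hfd t ht1).rpow_const (Or.inl hft.ne')
  have hφ' : ∀ t ∈ Set.Ici T2, g t * (1 - β) * f t ^ (1 - β - 1) ≤ -(k * 1) := by
    intro t ht
    have ht1 : (1:ℝ) ≤ t := le_trans hT2one ht
    have hft : 0 < f t := hfpos t (by linarith)
    have hneg : 0 < f t ^ (-β) := Real.rpow_pos_of_pos hft _
    have hcancel : f t ^ β * f t ^ (-β) = 1 := by
      rw [← Real.rpow_add hft]
      simp
    have h1 : c3 ≤ g t * f t ^ (-β) := by
      have h2 := mul_le_mul_of_nonneg_right (hgf t ht) hneg.le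
      calc c3 = c3 * (f t ^ β * f t ^ (-β)) := by rw [hcancel]; ring
        _ = c3 * f t ^ β * f t ^ (-β) := by ring
        _ ≤ g t * f t ^ (-β) := h2
    have h3 : (1 - β) * (g t * f t ^ (-β)) ≤ (1 - β) * c3 :=
      mul_le_mul_of_nonpos_left h1 (by linarith)
    rw [show (1 - β - 1 : ℝ) = -β by ring, hkdef]
    nlinarith [h3]
  have hlin : ∀ t ∈ Set.Ici T2, HasDerivAt (fun t => φ T2 - k * (t - T2)) (-(k * 1)) t :=
    fun t _ => (((hasDerivAt_id t).sub_const T2).const_mul k).const_sub (φ T2)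
  have hcomp := comp_le T2 φ (fun t => φ T2 - k * (t - T2))
    (fun t => g t * (1 - β) * f t ^ (1 - β - 1)) (fun _ => -(k * 1))
    hφd hlin (by simp) hφ'
  have hφT2 : 0 < φ T2 := Real.rpow_pos_of_pos (hfpos T2 (by linarith)) _
  obtain ⟨tstar, htstardef⟩ : ∃ s : ℝ, s = T2 + (φ T2 + 1) / k := ⟨_, rfl⟩
  have htst : T2 ≤ tstar := by
    have h5 : 0 ≤ (φ T2 + 1) / k := div_nonneg (by linarith) hk.le
    rw [htstardef]
    linarith
  have hval : φ tstar ≤ φ T2 - k * (tstar - T2) := hcomp tstar htst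
  have heval : φ T2 - k * (tstar - T2) = -1 := by
    rw [htstardef]
    have h6 : T2 + (φ T2 + 1) / k - T2 = (φ T2 + 1) / k := by ring
    rw [h6, mul_comm k, div_mul_cancel₀ _ hk.ne']
    ring
  have hφpos : 0 < φ tstar := Real.rpow_pos_of_pos (hfpos tstar (by rw [htstardef] at htst ⊢; linarith)) _
  rw [heval] at hval
  linarith
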